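/- Let 0<q<1. For every x>0, e^{-γ_q} < (Γ_q(x+1))^{1/x} < 1/(1-q), where γ_q = -ψ_q(1) is the q-analogue of the Euler–Mascheroni constant. -/

import Mathlib

open Real

/-- The q-digamma function: ψ_q(x) = -log(1-q) + (log q)·∑_{n=1}^∞ q^{nx}/(1-q^n). -/
noncomputable def qDigamma (q x : ℝ) : ℝ :=
  -Real.log (1 - q) + Real.log q * ∑' n : ℕ, q ^ (((n : ℝ) + 1) * x) / (1 - q ^ (n + 1))

/-- The q-gamma function: Γ_q(x) = (q;q)_∞/(q^x;q)_∞ · (1-q)^{1-x}. -/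
noncomputable def qGamma (q x : ℝ) : ℝ :=
  ((∏' i : ℕ, (1 - q ^ (i + 1))) / ∏' i : ℕ, (1 - q ^ (x + (i : ℝ)))) * (1 - q) ^ (1 - x)

/-- The q-bracket: [x]_q = (1-q^x)/(1-q). -/
noncomputable def qBracket (q x : ℝ) : ℝ := (1 - q ^ x) / (1 - q)

/-- The q-analogue of the Euler–Mascheroni constant: γ_q = -ψ_q(1). -/
noncomputable def qEulerMascheroni (q : ℝ) : ℝ := -qDigamma q 1

/-- Core pointwise inequality: for 0 < a < 1, 0 < u < 1,
`log u * (a/(1-a)) < log(1-a) - log(1-a*u)`. -/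
lemma core_ineq {a u : ℝ} (ha0 : 0 < a) (ha1 : a < 1) (hu0 : 0 < u) (hu1 : u < 1) :
    Real.log u * (a / (1 - a)) < Real.log (1 - a) - Real.log (1 - a * u) := by
  have h1a : 0 < 1 - a := by linarith
  have hau : a * u < a := mul_lt_of_lt_one_right ha0 hu1
  have hau0 : 0 < a * u := mul_pos ha0 hu0
  have h1au : 0 < 1 - a * u := by linarith
  have hr1 : 1 < (1 - a * u) / (1 - a) := (one_lt_div h1a).mpr (by linarith)
  have h2 : Real.log ((1 - a * u) / (1 - a)) < (1 - a * u) / (1 - a) - 1 :=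
    Real.log_lt_sub_one_of_pos (by positivity) (ne_of_gt hr1)
  rw [Real.log_div (by positivity) (by positivity)] at h2
  have heq : (1 - a * u) / (1 - a) - 1 = a * (1 - u) / (1 - a) := by
    field_simp
    ring
  rw [heq] at h2
  have h3 : Real.log u ≤ u - 1 := Real.log_le_sub_one_of_pos hu0
  have h4 : a * (1 - u) / (1 - a) ≤ a * (-Real.log u) / (1 - a) := by
    gcongr
    linarith
  have h5 : a * (-Real.log u) / (1 - a) = -(Real.log u * (a / (1 - a))) := by ring
  linarith [h2.trans_le h4]

lemma neg_log_le {q b : ℝ} (hq1 : q < 1) (hb0 : 0 < b) (hbq : b ≤ q) :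
    -Real.log (1 - b) ≤ b / (1 - q) := by
  have h1b : 0 < 1 - b := by linarith
  have h1q : 0 < 1 - q := by linarith
  rw [← Real.log_inv]
  have h := Real.log_le_sub_one_of_pos (inv_pos.mpr h1b)
  have heq : (1 - b)⁻¹ - 1 = b / (1 - b) := by field_simp; ring
  calc Real.log (1 - b)⁻¹ ≤ (1 - b)⁻¹ - 1 := h
    _ = b / (1 - b) := heq
    _ ≤ b / (1 - q) := div_le_div_of_nonneg_left hb0.le h1q (by linarith)

/-- e^{-γ_q} < (Γ_q(x+1))^{1/x} < 1/(1-q) for all x > 0. -/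
theorem qGamma_root_bounds (q : ℝ) (hq0 : 0 < q) (hq1 : q < 1) (x : ℝ) (hx : 0 < x) :
    Real.exp (-qEulerMascheroni q) < qGamma q (x + 1) ^ (1 / x) ∧
    qGamma q (x + 1) ^ (1 / x) < 1 / (1 - q) := by
  have h1q : (0:ℝ) < 1 - q := by linarith
  set u : ℝ := q ^ x with hu_def
  have hu0 : 0 < u := Real.rpow_pos_of_pos hq0 x
  have hu1 : u < 1 := Real.rpow_lt_one hq0.le hq1 hx
  set a : ℕ → ℝ := fun i => q ^ (i + 1) with ha_def
  have ha0 : ∀ i, 0 < a i := fun i => pow_pos hq0 _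
  have ha1 : ∀ i, a i < 1 := fun i => pow_lt_one₀ hq0.le hq1 i.succ_ne_zero
  have haq : ∀ i, a i ≤ q := by
    intro i
    calc a i = q ^ (i + 1) := rfl
      _ ≤ q ^ 1 := pow_le_pow_of_le_one hq0.le hq1.le (by omega)
      _ = q := pow_one q
  have hsa : Summable a := by
    have : Summable (fun i : ℕ => q ^ i * q) :=
      (summable_geometric_of_lt_one hq0.le hq1).mul_right q
    simpa [ha_def, pow_succ] using this
  have hpos1 : ∀ i, (0:ℝ) < 1 - a i := fun i => by linarith [ha1 i]
  have hauu : ∀ i, a i * u < a i := fun i => mul_lt_of_lt_one_right (ha0 i) hu1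
  have hposu : ∀ i, (0:ℝ) < 1 - a i * u := fun i => by linarith [ha1 i, hauu i]
  have hSlog1 : Summable fun i => Real.log (1 - a i) := by
    rw [← summable_neg_iff]
    apply Summable.of_nonneg_of_le (fun i => ?_) (fun i => neg_log_le hq1 (ha0 i) (haq i))
      (hsa.div_const (1 - q))
    have : Real.log (1 - a i) ≤ 0 := Real.log_nonpos (by linarith [ha1 i]) (by linarith [ha0 i])
    linarith
  have hSlogu : Summable fun i => Real.log (1 - a i * u) := by
    rw [← summable_neg_iff]
    apply Summable.of_nonneg_of_le (fun i => ?_) (fun i => ?_) (hsa.div_const (1 - q))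
    · have : Real.log (1 - a i * u) ≤ 0 :=
        Real.log_nonpos (by linarith [hposu i]) (by nlinarith [ha0 i, hauu i, hu0])
      linarith
    · calc -Real.log (1 - a i * u) ≤ (a i * u) / (1 - q) :=
            neg_log_le hq1 (mul_pos (ha0 i) hu0) (le_trans (hauu i).le (haq i))
        _ ≤ a i / (1 - q) := by gcongr; exact (hauu i).le
  set A : ℝ := ∑' i, Real.log (1 - a i) with hA_def
  set B : ℝ := ∑' i, Real.log (1 - a i * u) with hB_def
  have hP : (∏' i : ℕ, (1 - q ^ (i + 1))) = Real.exp A := by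
    have h := hSlog1.hasSum.rexp
    have heq : (rexp ∘ fun i => Real.log (1 - a i)) = fun i : ℕ => 1 - q ^ (i + 1) := by
      funext i
      simp only [Function.comp_apply, Real.exp_log (hpos1 i)]
      rfl
    rw [heq] at h
    exact h.tprod_eq
  have hfac : ∀ i : ℕ, q ^ (x + 1 + (i : ℝ)) = a i * u := by
    intro i
    have h : x + 1 + (i : ℝ) = x + ((i + 1 : ℕ) : ℝ) := by push_cast; ring
    rw [h, Real.rpow_add hq0, Real.rpow_natCast]
    ring
  have hQ : (∏' i : ℕ, (1 - q ^ (x + 1 + (i : ℝ)))) = Real.exp B := by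
    have h := hSlogu.hasSum.rexp
    have heq : (rexp ∘ fun i => Real.log (1 - a i * u))
        = fun i : ℕ => 1 - q ^ (x + 1 + (i : ℝ)) := by
      funext i
      simp only [Function.comp_apply, Real.exp_log (hposu i), hfac i]
    rw [heq] at h
    exact h.tprod_eq
  have hGamma : qGamma q (x + 1) = Real.exp (A - B + Real.log (1 - q) * (-x)) := by
    rw [qGamma, hP, hQ, show (1 : ℝ) - (x + 1) = -x by ring, Real.rpow_def_of_pos h1q,
      ← Real.exp_sub, ← Real.exp_add]
  have hSsum : (∑' n : ℕ, q ^ (((n : ℝ) + 1) * 1) / (1 - q ^ (n + 1)))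
      = ∑' n : ℕ, a n / (1 - a n) := by
    refine tsum_congr fun n => ?_
    have h : ((n : ℝ) + 1) * 1 = ((n + 1 : ℕ) : ℝ) := by push_cast; ring
    rw [h, Real.rpow_natCast]
  set S : ℝ := ∑' n : ℕ, a n / (1 - a n) with hS_def
  have hsS : Summable fun n => a n / (1 - a n) := by
    apply Summable.of_nonneg_of_le (fun i => div_nonneg (ha0 i).le (hpos1 i).le)
      (fun i => div_le_div_of_nonneg_left (ha0 i).le h1q (by linarith [haq i]))
      (hsa.div_const (1 - q))
  have hgamma : -qEulerMascheroni q = -Real.log (1 - q) + Real.log q * S := by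
    rw [qEulerMascheroni, neg_neg, qDigamma, hSsum]
  have hkey : Real.log u * S < A - B := by
    have hAB : A - B = ∑' i, (Real.log (1 - a i) - Real.log (1 - a i * u)) :=
      (Summable.tsum_sub hSlog1 hSlogu).symm
    rw [hAB, hS_def, ← tsum_mul_left]
    exact Summable.tsum_lt_tsum (fun i => (core_ineq (ha0 i) (ha1 i) hu0 hu1).le)
      (core_ineq (ha0 0) (ha1 0) hu0 hu1) (hsS.mul_left _) (hSlog1.sub hSlogu)
  have hlogu : Real.log u = x * Real.log q := Real.log_rpow hq0 x
  have hABlt : A < B := by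
    refine Summable.tsum_lt_tsum (fun i => ?_) (i := 0) ?_ hSlog1 hSlogu
    · exact (Real.log_lt_log (hpos1 i) (by linarith [hauu i])).le
    · exact Real.log_lt_log (hpos1 0) (by linarith [hauu 0])
  have hGpos : 0 < qGamma q (x + 1) := by rw [hGamma]; exact Real.exp_pos _
  constructor
  · have h1 : Real.exp (-qEulerMascheroni q) = Real.exp (x * (-qEulerMascheroni q)) ^ (1 / x) := by
      rw [← Real.exp_mul]
      congr 1
      field_simp
    rw [h1]
    apply Real.rpow_lt_rpow (Real.exp_pos _).le _ (by positivity)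
    rw [hGamma]
    apply Real.exp_lt_exp.mpr
    rw [hgamma]
    have h2 : x * (-Real.log (1 - q) + Real.log q * S)
        = Real.log u * S - x * Real.log (1 - q) := by rw [hlogu]; ring
    rw [h2]
    have h3 : A - B + Real.log (1 - q) * (-x) = (A - B) - x * Real.log (1 - q) := by ring
    rw [h3]
    linarith [hkey]
  · have h2 : qGamma q (x + 1) < (1 / (1 - q)) ^ x := by
      rw [hGamma, one_div, Real.rpow_def_of_pos (inv_pos.mpr h1q), Real.log_inv]
      apply Real.exp_lt_exp.mpr
      nlinarith [hABlt]
    calc qGamma q (x + 1) ^ (1 / x) < ((1 / (1 - q)) ^ x) ^ (1 / x) :=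
          Real.rpow_lt_rpow hGpos.le h2 (by positivity)
      _ = 1 / (1 - q) := by
          rw [← Real.rpow_mul (by positivity), mul_one_div, div_self hx.ne', Real.rpow_one]
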